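/- Let β ∈ ℝⁿ be nonzero, f_n ∈ ℝⁿ, G_n ∈ ℝ^{n×m}, h_n ∈ ℝˡ, γ > 0, k ∈ [0,1]. Define V_f = βᵀf_n and V_Gh = (1/(2γ²))‖G_nᵀβ‖² + (1/2)‖h_n‖², and assume V_Gh > 0. Set s = C(−V_f/V_Gh; k², 1), f_m = f_n − (1/‖β‖²)·R(V_f + k²·V_Gh)·β, G_m = G_n − (1 − √s)·(ββᵀ/‖β‖²)·G_n, h_m = √s·h_n. Then HJ(f_m, G_m, h_m) ≤ 0, where HJ(f,G,h) = βᵀf + (1/(2γ²))‖Gᵀβ‖² + (1/2)‖h‖². -/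

import Mathlib

open Matrix

/-- With V_f = βᵀf_n and V_Gh = (1/(2γ²))‖G_nᵀβ‖² + (1/2)‖h_n‖² > 0,
s = C(−V_f/V_Gh; k², 1), the projected triplet
f_m = f_n − (1/‖β‖²)·R(V_f + k²V_Gh)·β, G_m = G_n − (1−√s)·(ββᵀ/‖β‖²)·G_n, h_m = √s·h_n
satisfies HJ(f_m,G_m,h_m) ≤ 0. -/
theorem stmt10 {n m l : ℕ} (β : Fin n → ℝ) (hβ : β ≠ 0) (γ : ℝ) (hγ : 0 < γ)
    (fn : Fin n → ℝ) (Gn : Matrix (Fin n) (Fin m) ℝ) (hn : Fin l → ℝ)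
    (k : ℝ) (hk0 : 0 ≤ k) (hk1 : k ≤ 1) :
    let Vf : ℝ := β ⬝ᵥ fn
    let VGh : ℝ := (1 / (2 * γ ^ 2)) * ((Gnᵀ *ᵥ β) ⬝ᵥ (Gnᵀ *ᵥ β)) + (1 / 2) * (hn ⬝ᵥ hn)
    0 < VGh →
    let s : ℝ := min (max (-Vf / VGh) (k ^ 2)) 1
    let fm : Fin n → ℝ := fn - ((1 / (β ⬝ᵥ β)) * max (Vf + k ^ 2 * VGh) 0) • β
    let Gm : Matrix (Fin n) (Fin m) ℝ :=
      Gn - (1 - Real.sqrt s) • (((1 / (β ⬝ᵥ β)) • vecMulVec β β) * Gn)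
    let hm : Fin l → ℝ := Real.sqrt s • hn
    β ⬝ᵥ fm + (1 / (2 * γ ^ 2)) * ((Gmᵀ *ᵥ β) ⬝ᵥ (Gmᵀ *ᵥ β)) + (1 / 2) * (hm ⬝ᵥ hm) ≤ 0 := by
  intro Vf VGh hVGh s fm Gm hm
  have hββ : 0 < β ⬝ᵥ β := by
    have hnn : 0 ≤ β ⬝ᵥ β := Finset.sum_nonneg fun i _ => mul_self_nonneg _
    rcases lt_or_eq_of_le hnn with h | h
    · exact h
    · exact absurd (dotProduct_self_eq_zero.mp h.symm) hβ
  -- s bounds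
  have hsk : k ^ 2 ≤ s := le_min (le_max_right _ _) (by nlinarith)
  have hs0 : 0 ≤ s := le_trans (sq_nonneg k) hsk
  have hs1 : s ≤ 1 := min_le_right _ _
  have hsq : Real.sqrt s ^ 2 = s := Real.sq_sqrt hs0
  -- first term
  have h1 : β ⬝ᵥ fm = Vf - max (Vf + k ^ 2 * VGh) 0 := by
    show β ⬝ᵥ (fn - ((1 / (β ⬝ᵥ β)) * max (Vf + k ^ 2 * VGh) 0) • β) = _
    rw [dotProduct_sub, dotProduct_smul]
    field_simp
    rw [smul_eq_mul, div_mul_cancel₀ _ hββ.ne']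
  -- G term
  have hG : Gmᵀ *ᵥ β = Real.sqrt s • (Gnᵀ *ᵥ β) := by
    funext j
    show (Gmᵀ *ᵥ β) j = _
    have : ∀ i, Gm i j = Gn i j - (1 - Real.sqrt s) * ((1 / (β ⬝ᵥ β)) *
        (β i * (∑ i', β i' * Gn i' j))) := by
      intro i
      simp [Gm, Matrix.sub_apply, Matrix.smul_apply, Matrix.mul_apply, vecMulVec_apply,
        Finset.mul_sum, mul_assoc]
    simp only [mulVec, dotProduct, transpose_apply, Pi.smul_apply, smul_eq_mul]
    rw [Finset.sum_congr rfl (fun i _ => by rw [this i])]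
    have hsum : ∑ i, (Gn i j - (1 - Real.sqrt s) * ((1 / (β ⬝ᵥ β)) *
        (β i * (∑ i', β i' * Gn i' j)))) * β i
        = (∑ i, Gn i j * β i) - (1 - Real.sqrt s) * ((1 / (β ⬝ᵥ β)) *
          ((∑ i, β i * β i) * (∑ i', β i' * Gn i' j))) := by
      have hterm : ∀ i : Fin n, (Gn i j - (1 - Real.sqrt s) * ((1 / (β ⬝ᵥ β)) *
          (β i * (∑ i', β i' * Gn i' j)))) * β i
          = Gn i j * β i - ((1 - Real.sqrt s) * ((1 / (β ⬝ᵥ β)) *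
            (∑ i', β i' * Gn i' j))) * (β i * β i) := fun i => by ring
      rw [Finset.sum_congr rfl fun i _ => hterm i, Finset.sum_sub_distrib, ← Finset.mul_sum]
      ring
    rw [hsum]
    have hbb : ∑ i, β i * β i = β ⬝ᵥ β := rfl
    have hgb : ∑ i', β i' * Gn i' j = ∑ i, Gn i j * β i := by
      exact Finset.sum_congr rfl (fun i _ => mul_comm _ _)
    rw [hbb, hgb]
    field_simp
    ring
  have h2 : (Gmᵀ *ᵥ β) ⬝ᵥ (Gmᵀ *ᵥ β) = s * ((Gnᵀ *ᵥ β) ⬝ᵥ (Gnᵀ *ᵥ β)) := by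
    rw [hG, smul_dotProduct, dotProduct_smul, smul_eq_mul, smul_eq_mul, ← mul_assoc,
      ← sq, hsq]
  have h3 : hm ⬝ᵥ hm = s * (hn ⬝ᵥ hn) := by
    show (Real.sqrt s • hn) ⬝ᵥ (Real.sqrt s • hn) = _
    rw [smul_dotProduct, dotProduct_smul, smul_eq_mul, smul_eq_mul, ← mul_assoc, ← sq, hsq]
  rw [h1, h2, h3]
  have hrw : (1 / (2 * γ ^ 2)) * (s * ((Gnᵀ *ᵥ β) ⬝ᵥ (Gnᵀ *ᵥ β))) +
      (1 / 2) * (s * (hn ⬝ᵥ hn)) = s * VGh := by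
    simp only [VGh]; ring
  have : Vf - max (Vf + k ^ 2 * VGh) 0 + ((1 / (2 * γ ^ 2)) * (s * ((Gnᵀ *ᵥ β) ⬝ᵥ (Gnᵀ *ᵥ β))) +
      (1 / 2) * (s * (hn ⬝ᵥ hn))) ≤ 0 := by
    rw [hrw]
    rcases le_or_gt (Vf + k ^ 2 * VGh) 0 with hc | hc
    · rw [max_eq_right hc]
      have hk2 : k ^ 2 ≤ -Vf / VGh := (le_div_iff₀ hVGh).mpr (by nlinarith)
      have hsle : s ≤ -Vf / VGh := min_le_of_left_le (max_le le_rfl hk2)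
      have := (le_div_iff₀ hVGh).mp hsle
      linarith
    · rw [max_eq_left hc.le]
      have hmax : max (-Vf / VGh) (k ^ 2) = k ^ 2 :=
        max_eq_right ((div_le_iff₀ hVGh).mpr (by nlinarith))
      have hseq : s = k ^ 2 := by
        show min (max (-Vf / VGh) (k ^ 2)) 1 = k ^ 2
        rw [hmax]; exact min_eq_left (by nlinarith)
      rw [hseq]
      linarith
  linarith
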